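/- For the normalized sinc filter κ(t) = sinc(π f_s t) (with κ(0)=1), for every τ ∈ [0, (N-1)/f_s], the sum ∑_{n=0}^{N-1} κ(n/f_s - τ) is strictly positive. -/

import Mathlib

section

open Finset Real

lemma alt_aux (b : ℕ → ℝ) (hb : ∀ k, 0 < b k) (hanti : ∀ k, b (k+1) < b k) :
    ∀ n : ℕ, 0 < (∑ k ∈ Finset.range (n+1), (-1:ℝ)^k * b k) ∧
      (Even n → b n ≤ ∑ k ∈ Finset.range (n+1), (-1:ℝ)^k * b k) := by
  intro n
  induction n with
  | zero => constructor <;> simp [hb 0]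
  | succ n ih =>
    rw [Finset.sum_range_succ]
    rcases Nat.even_or_odd n with he | ho
    · have h1 := ih.2 he
      have hsign : ((-1:ℝ))^(n+1) = -1 := (he.add_one).neg_one_pow
      refine ⟨?_, ?_⟩
      · rw [hsign]; nlinarith [hanti n]
      · intro h
        exact absurd h (by simpa using he.add_one)
    · have hsign : ((-1:ℝ))^(n+1) = 1 := (ho.add_one).neg_one_pow
      refine ⟨?_, ?_⟩
      · rw [hsign]; nlinarith [ih.1, hb (n+1)]
      · intro _; rw [hsign]; nlinarith [ih.1]

lemma alt_pos (b : ℕ → ℝ) (hb : ∀ k, 0 < b k) (hanti : ∀ k, b (k+1) < b k) (n : ℕ) :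
    0 < ∑ k ∈ Finset.range (n+1), (-1:ℝ)^k * b k :=
  (alt_aux b hb hanti n).1

lemma inv_alt_pos (c : ℝ) (hc : 0 < c) (n : ℕ) :
    0 < ∑ k ∈ Finset.range (n+1), (-1:ℝ)^k * (c + k)⁻¹ := by
  refine alt_pos _ (fun k => by positivity) (fun k => ?_) n
  have h1 : (0:ℝ) < c + k := by positivity
  rw [inv_lt_inv₀ (by push_cast; linarith) h1]
  push_cast; linarith

end

/-- Normalized sinc: sinc(x) = sin(x)/x for x ≠ 0 and sinc(0) = 1. -/
noncomputable def sinc (x : ℝ) : ℝ := if x = 0 then 1 else Real.sin x / x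

/-- For the sinc filter κ(t) = sinc(π f_s t), for every τ ∈ [0, (N−1)/f_s],
the sum ∑_{n=0}^{N-1} κ(n/f_s − τ) is strictly positive. -/
theorem stmt2 (fs : ℝ) (hfs : 0 < fs) (N : ℕ) (hN : 1 ≤ N) (τ : ℝ)
    (hτ0 : 0 ≤ τ) (hτ1 : τ ≤ ((N : ℝ) - 1) / fs) :
    0 < ∑ n ∈ Finset.range N, sinc (Real.pi * fs * ((n : ℝ) / fs - τ)) := by
  have hπ := Real.pi_pos
  have hπ' : Real.pi ≠ 0 := ne_of_gt hπ
  have hfs' : fs ≠ 0 := ne_of_gt hfs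
  set x : ℝ := fs * τ with hxdef
  have hx0 : 0 ≤ x := mul_nonneg hfs.le hτ0
  have hx1 : x ≤ (N:ℝ) - 1 := by
    rw [hxdef, mul_comm]
    exact (le_div_iff₀ hfs).mp hτ1
  have harg : ∀ n : ℕ, Real.pi * fs * ((n : ℝ) / fs - τ) = Real.pi * ((n:ℝ) - x) := by
    intro n; field_simp; ring
  clear_value x
  simp only [harg]
  by_cases h : ∃ k : ℕ, (k:ℝ) = x
  · obtain ⟨m, hm⟩ := h
    have hmN : m < N := by
      have h1 : (m:ℝ) < N := by rw [hm]; linarith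
      exact_mod_cast h1
    have hsum : ∑ n ∈ Finset.range N, sinc (Real.pi * ((n:ℝ) - x)) = 1 := by
      rw [Finset.sum_eq_single m]
      · rw [← hm]; simp [sinc]
      · intro n _ hnm
        have h1 : Real.pi * ((n:ℝ) - x) = (((n:ℤ) - (m:ℤ) : ℤ) : ℝ) * Real.pi := by
          rw [← hm]; push_cast; ring
        have h2 : (((n:ℤ) - (m:ℤ) : ℤ) : ℝ) * Real.pi ≠ 0 := by
          refine mul_ne_zero ?_ hπ'
          have : (n:ℤ) - (m:ℤ) ≠ 0 := sub_ne_zero.mpr (by exact_mod_cast hnm)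
          exact_mod_cast this
        rw [h1, sinc, if_neg h2, Real.sin_int_mul_pi, zero_div]
      · intro hmem; exact absurd (Finset.mem_range.mpr hmN) hmem
    rw [hsum]; norm_num
  · have hxnot : ∀ n : ℕ, (n:ℝ) ≠ x := fun n hn => h ⟨n, hn⟩
    set m : ℕ := ⌊x⌋.toNat with hmdef
    have hmfloor : ((m:ℤ) : ℝ) = ((⌊x⌋ : ℤ) : ℝ) := by
      rw [hmdef]; norm_cast
      exact Int.toNat_of_nonneg (Int.floor_nonneg.mpr hx0)
    have hmle : (m:ℝ) ≤ x := by
      have := Int.floor_le x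
      push_cast at hmfloor ⊢; rw [hmfloor]; exact this
    have hmlt : (m:ℝ) < x := lt_of_le_of_ne hmle (hxnot m)
    have hxlt : x < (m:ℝ) + 1 := by
      have := Int.lt_floor_add_one x
      push_cast at hmfloor ⊢; rw [hmfloor]; exact this
    have hxN : x < (N:ℝ) - 1 := by
      refine lt_of_le_of_ne hx1 ?_
      have h1 : ((N - 1 : ℕ) : ℝ) = (N:ℝ) - 1 := by
        push_cast [hN]; ring
      rw [← h1]
      exact (hxnot (N-1)).symm
    have hmN : m + 1 < N := by
      have h1 : (m:ℝ) < (N:ℝ) - 1 := lt_trans hmlt hxN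
      have h2 : (m:ℝ) + 1 < N := by linarith
      exact_mod_cast h2
    set y : ℝ := x - m with hydef
    set z : ℝ := (m:ℝ) + 1 - x with hzdef
    clear_value y z
    have hy0 : 0 < y := by rw [hydef]; linarith
    have hy1 : y < 1 := by rw [hydef]; linarith
    have hz0 : 0 < z := by rw [hzdef]; linarith
    have hsinx : Real.sin (Real.pi * x) = (-1:ℝ)^m * Real.sin (Real.pi * y) := by
      have h1 : Real.pi * x = (m:ℝ) * Real.pi - (-(Real.pi * y)) := by
        rw [hydef]; ring
      rw [h1, Real.sin_nat_mul_pi_sub, Real.sin_neg]; ring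
    have hterm : ∀ n ∈ Finset.range N, sinc (Real.pi * ((n:ℝ) - x)) =
        (Real.sin (Real.pi * y) / Real.pi) * ((-1:ℝ)^(m+n) * (x - (n:ℝ))⁻¹) := by
      intro n _
      have hxn : (n:ℝ) - x ≠ 0 := sub_ne_zero.mpr (hxnot n)
      have hxn' : x - (n:ℝ) ≠ 0 := sub_ne_zero.mpr (hxnot n).symm
      have harg0 : Real.pi * ((n:ℝ) - x) ≠ 0 := mul_ne_zero hπ' hxn
      rw [sinc, if_neg harg0]
      have h1 : Real.pi * ((n:ℝ) - x) = (n:ℝ) * Real.pi - Real.pi * x := by ring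
      rw [h1, Real.sin_nat_mul_pi_sub, hsinx, pow_add]
      have h3 : -(Real.pi * x) + Real.pi * (n:ℝ) ≠ 0 := by
        rw [show -(Real.pi * x) + Real.pi * (n:ℝ) = Real.pi * ((n:ℝ) - x) from by ring]
        exact harg0
      rw [← h1, show x - (n:ℝ) = -((n:ℝ) - x) by ring, inv_neg]
      field_simp
    rw [Finset.sum_congr rfl hterm, ← Finset.mul_sum]
    have hfac : 0 < Real.sin (Real.pi * y) / Real.pi := by
      refine div_pos (Real.sin_pos_of_pos_of_lt_pi (by positivity) ?_) hπ
      nlinarith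
    refine mul_pos hfac ?_
    rw [Finset.range_eq_Ico, ← Finset.sum_Ico_consecutive _ (Nat.zero_le (m+1)) (le_of_lt hmN)]
    refine add_pos ?_ ?_
    · rw [← Finset.range_eq_Ico]
      have key : ∑ n ∈ Finset.range (m+1), (-1:ℝ)^(m+n) * (x - (n:ℝ))⁻¹
          = ∑ k ∈ Finset.range (m+1), (-1:ℝ)^k * (y + (k:ℝ))⁻¹ := by
        rw [← Finset.sum_range_reflect]
        refine Finset.sum_congr rfl ?_
        intro k hk
        have hk' : k ≤ m := Nat.lt_succ_iff.mp (Finset.mem_range.mp hk)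
        have e1 : m + 1 - 1 - k = m - k := by omega
        have e2 : ((m - k : ℕ) : ℝ) = (m:ℝ) - (k:ℝ) := by
          push_cast [hk']; ring
        have e3 : (-1:ℝ)^(m + (m - k)) = (-1:ℝ)^k := by
          rw [neg_one_pow_eq_pow_mod_two, neg_one_pow_eq_pow_mod_two (n := k)]
          congr 1; omega
        rw [e1, e2, e3]
        congr 1
        rw [hydef]; ring
      rw [key]
      exact inv_alt_pos y hy0 m
    · rw [Finset.sum_Ico_eq_sum_range]
      have key : ∀ k ∈ Finset.range (N - (m+1)),
          (-1:ℝ)^(m+(m+1+k)) * (x - ((m+1+k : ℕ):ℝ))⁻¹ = (-1:ℝ)^k * (z + (k:ℝ))⁻¹ := by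
        intro k _
        have e3 : (-1:ℝ)^(m + (m+1+k)) = -(-1:ℝ)^k := by
          rw [neg_one_pow_eq_pow_mod_two]
          rw [show (m + (m+1+k)) % 2 = (k+1) % 2 from by omega]
          rw [← neg_one_pow_eq_pow_mod_two, pow_succ]
          ring
        have e4 : (x - ((m+1+k : ℕ):ℝ)) = -(z + (k:ℝ)) := by
          rw [hzdef]; push_cast; ring
        rw [e3, e4, inv_neg]
        ring
      rw [Finset.sum_congr rfl key, show N - (m+1) = (N - m - 2) + 1 from by omega]
      exact inv_alt_pos z hz0 (N - m - 2)
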